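/- Suppose Algorithm 1 generates an infinite sequence {(xᵏ, t_k, λᵏ, r_k)}, i.e. t_{k+1} > 0 for all k, (x^{k+1}, t_{k+1}) ∈ A(λᵏ, r_k), λ^{k+1} = λᵏ + (r_k/t_{k+1}) h(x^{k+1}) and r_{k+1} = 2 r_k. If the sequence {λᵏ} is bounded and there exists an optimal dual solution (λ̄, r̄), then the sequence {r_k} is bounded; in fact r_k ≤ ‖λ̄ − λᵏ‖ + r̄ for all k. -/

import Mathlib

noncomputable section

open Classical in
/-- The extended-real-valued smoothing function `L̃_{λ,r}(x,t)`. -/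
def Ltilde {n m : ℕ} (f : EuclideanSpace ℝ (Fin n) → ℝ)
    (h : EuclideanSpace ℝ (Fin n) → EuclideanSpace ℝ (Fin m))
    (lam : EuclideanSpace ℝ (Fin m)) (r : ℝ)
    (x : EuclideanSpace ℝ (Fin n)) (t : ℝ) : EReal :=
  if 0 < t then
    (((f x + (inner ℝ lam (h x) : ℝ) + r / (2 * t) * ‖h x‖ ^ 2 + r / 2 * t) : ℝ) : EReal)
  else if t = 0 ∧ h x = 0 then ((f x : ℝ) : EReal)
  else ⊤

/-- The augmented dual function `q̃(λ, r) = inf_{(x,t)} L̃_{λ,r}(x,t)`. -/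
def qtilde {n m : ℕ} (f : EuclideanSpace ℝ (Fin n) → ℝ)
    (h : EuclideanSpace ℝ (Fin n) → EuclideanSpace ℝ (Fin m))
    (lam : EuclideanSpace ℝ (Fin m)) (r : ℝ) : EReal :=
  ⨅ p : EuclideanSpace ℝ (Fin n) × ℝ, Ltilde f h lam r p.1 p.2

/-- The set `A(λ, r)` of global minimizers of `L̃_{λ,r}`. -/
def Aset {n m : ℕ} (f : EuclideanSpace ℝ (Fin n) → ℝ)
    (h : EuclideanSpace ℝ (Fin n) → EuclideanSpace ℝ (Fin m))
    (lam : EuclideanSpace ℝ (Fin m)) (r : ℝ) :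
    Set (EuclideanSpace ℝ (Fin n) × ℝ) :=
  {p | Ltilde f h lam r p.1 p.2 = qtilde f h lam r}

/-- along an infinite run of Algorithm 1, if `{λᵏ}` is bounded and there is an
optimal dual solution `(λ̄, r̄)`, then `r_k ≤ ‖λ̄ − λᵏ‖ + r̄` for all `k`; in particular
`{r_k}` is bounded. -/
theorem stmt7 {n m : ℕ} (f : EuclideanSpace ℝ (Fin n) → ℝ)
    (h : EuclideanSpace ℝ (Fin n) → EuclideanSpace ℝ (Fin m))
    (hf : ContDiff ℝ 2 f) (hh : ContDiff ℝ 2 h)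
    (x : ℕ → EuclideanSpace ℝ (Fin n)) (t : ℕ → ℝ)
    (lam : ℕ → EuclideanSpace ℝ (Fin m)) (rr : ℕ → ℝ)
    (hr0 : 0 < rr 0)
    (hstep : ∀ k, 0 < t (k + 1) ∧
      (x (k + 1), t (k + 1)) ∈ Aset f h (lam k) (rr k) ∧
      lam (k + 1) = lam k + (rr k / t (k + 1)) • h (x (k + 1)) ∧
      rr (k + 1) = 2 * rr k)
    (hlambdd : ∃ C, ∀ k, ‖lam k‖ ≤ C)
    (lambar : EuclideanSpace ℝ (Fin m)) (rbar : ℝ) (hrbar : 0 < rbar)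
    (hdual : ∀ (lam' : EuclideanSpace ℝ (Fin m)) (r' : ℝ), 0 < r' →
      qtilde f h lam' r' ≤ qtilde f h lambar rbar) :
    (∀ k, rr k ≤ ‖lambar - lam k‖ + rbar) ∧ ∃ B, ∀ k, rr k ≤ B := by
  have hrpos : ∀ k, 0 < rr k := by
    intro k
    induction k with
    | zero => exact hr0
    | succ k ih => rw [(hstep k).2.2.2]; linarith
  have key : ∀ k, rr k ≤ ‖lambar - lam k‖ + rbar := by
    intro k
    obtain ⟨ht, hA, -, -⟩ := hstep k
    have h1 : Ltilde f h (lam k) (rr k) (x (k+1)) (t (k+1)) ≤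
        Ltilde f h lambar rbar (x (k+1)) (t (k+1)) := by
      calc Ltilde f h (lam k) (rr k) (x (k+1)) (t (k+1))
          = qtilde f h (lam k) (rr k) := hA
        _ ≤ qtilde f h lambar rbar := hdual _ _ (hrpos k)
        _ ≤ Ltilde f h lambar rbar (x (k+1)) (t (k+1)) :=
            iInf_le _ ((x (k+1), t (k+1)) : EuclideanSpace ℝ (Fin n) × ℝ)
    rw [Ltilde, Ltilde, if_pos ht, if_pos ht, EReal.coe_le_coe_iff] at h1
    set u := h (x (k+1)) with hu
    set tt := t (k+1) with htt
    set a := rr k with ha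
    set N := ‖lambar - lam k‖ with hN
    have hN0 : 0 ≤ N := norm_nonneg _
    have hin : (inner ℝ lambar u : ℝ) - inner ℝ (lam k) u ≤ N * ‖u‖ := by
      have h3 := real_inner_le_norm (lambar - lam k) u
      rwa [inner_sub_left] at h3
    -- multiply h1 by 2*tt > 0
    have ht2 : (0:ℝ) < 2 * tt := by linarith
    have h2 := mul_le_mul_of_nonneg_right h1 ht2.le
    have e1 : (f (x (k+1)) + inner ℝ (lam k) u + a / (2 * tt) * ‖u‖ ^ 2 + a / 2 * tt) * (2 * tt)
        = f (x (k+1)) * (2 * tt) + (inner ℝ (lam k) u : ℝ) * (2 * tt) + a * ‖u‖ ^ 2 + a * tt ^ 2 := by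
      field_simp
    have e2 : (f (x (k+1)) + inner ℝ lambar u + rbar / (2 * tt) * ‖u‖ ^ 2 + rbar / 2 * tt) * (2 * tt)
        = f (x (k+1)) * (2 * tt) + (inner ℝ lambar u : ℝ) * (2 * tt) + rbar * ‖u‖ ^ 2 + rbar * tt ^ 2 := by
      field_simp
    rw [e1, e2] at h2
    -- now (a - rbar) * (‖u‖² + tt²) ≤ (inner diff) * 2tt ≤ N * ‖u‖ * 2tt ≤ N * (‖u‖² + tt²)
    have hamgm : 2 * tt * ‖u‖ ≤ ‖u‖ ^ 2 + tt ^ 2 := by nlinarith [sq_nonneg (‖u‖ - tt)]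
    have hSpos : (0:ℝ) < ‖u‖ ^ 2 + tt ^ 2 := by nlinarith [sq_nonneg ‖u‖]
    rcases le_or_gt a rbar with hle | hgt
    · linarith
    · have h4 : (a - rbar) * (‖u‖ ^ 2 + tt ^ 2) ≤ N * (‖u‖ ^ 2 + tt ^ 2) := by
        nlinarith [norm_nonneg u]
      have h5 : a - rbar ≤ N := le_of_mul_le_mul_right (by linarith) hSpos
      linarith
  refine ⟨key, ?_⟩
  obtain ⟨C, hC⟩ := hlambdd
  refine ⟨‖lambar‖ + C + rbar, fun k => ?_⟩
  have h6 : ‖lambar - lam k‖ ≤ ‖lambar‖ + ‖lam k‖ := norm_sub_le _ _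
  have := key k
  have := hC k
  linarith
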